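/- arXiv:1811.09155 — 6 statements merged into one kernel-verified Lean document; each statement's English description precedes it below -/
import Mathlib

section
/- Let γ ∈ Sp_n(ℝ), let z, w ∈ ℍ_n, and set γ' := diag(I_n, −I_n) · γ⁻¹ · diag(I_n, −I_n), which again lies in Sp_n(ℝ). Assume that the matrices c_γ z + d_γ and c_{γ'} w + d_{γ'} are invertible. Then det(c_γ z + d_γ) · det(γ·z + w) = det(c_{γ'} w + d_{γ'}) · det(γ'·w + z). -/
open Matrix MeasureTheory

noncomputable section

/-- The standard symplectic form matrix `ι = [[0, -I], [I, 0]]`. -/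
def symplJ (n : ℕ) (R : Type*) [CommRing R] :
    Matrix (Fin n ⊕ Fin n) (Fin n ⊕ Fin n) R :=
  Matrix.fromBlocks 0 (-1) 1 0

/-- `γ ∈ Sp_n(R)`, i.e. `γᵀ ι γ = ι`. -/
def IsSymplectic {n : ℕ} {R : Type*} [CommRing R]
    (γ : Matrix (Fin n ⊕ Fin n) (Fin n ⊕ Fin n) R) : Prop :=
  γᵀ * symplJ n R * γ = symplJ n R

/-- The Siegel upper half-space `ℍ_n`: complex symmetric matrices with
positive definite imaginary part. -/
def SiegelUpper (n : ℕ) : Set (Matrix (Fin n) (Fin n) ℂ) :=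
  {z | z.IsSymm ∧ (z.map Complex.im).PosDef}

/-- The action `γ·z = (aγ z + bγ)(cγ z + dγ)⁻¹` of a real symplectic matrix
on the Siegel upper half-space. -/
def siegelAct {n : ℕ} (γ : Matrix (Fin n ⊕ Fin n) (Fin n ⊕ Fin n) ℝ)
    (z : Matrix (Fin n) (Fin n) ℂ) : Matrix (Fin n) (Fin n) ℂ :=
  ((γ.toBlocks₁₁).map Complex.ofReal * z + (γ.toBlocks₁₂).map Complex.ofReal) *
    ((γ.toBlocks₂₁).map Complex.ofReal * z + (γ.toBlocks₂₂).map Complex.ofReal)⁻¹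

theorem statement2 {n : ℕ} (γ : Matrix (Fin n ⊕ Fin n) (Fin n ⊕ Fin n) ℝ)
    (hγ : IsSymplectic γ) (z w : Matrix (Fin n) (Fin n) ℂ)
    (hz : z ∈ SiegelUpper n) (hw : w ∈ SiegelUpper n)
    (γ' : Matrix (Fin n ⊕ Fin n) (Fin n ⊕ Fin n) ℝ)
    (hγ'def : γ' = Matrix.fromBlocks 1 0 0 (-1) * γ⁻¹ * Matrix.fromBlocks 1 0 0 (-1))
    (h1 : IsUnit ((γ.toBlocks₂₁).map Complex.ofReal * z +
      (γ.toBlocks₂₂).map Complex.ofReal).det)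
    (h2 : IsUnit ((γ'.toBlocks₂₁).map Complex.ofReal * w +
      (γ'.toBlocks₂₂).map Complex.ofReal).det) :
    IsSymplectic γ' ∧
      ((γ.toBlocks₂₁).map Complex.ofReal * z + (γ.toBlocks₂₂).map Complex.ofReal).det *
        (siegelAct γ z + w).det =
      ((γ'.toBlocks₂₁).map Complex.ofReal * w + (γ'.toBlocks₂₂).map Complex.ofReal).det *
        (siegelAct γ' w + z).det := by
  have hJJ : symplJ n ℝ * symplJ n ℝ = -1 := by
    rw [show (-1 : Matrix (Fin n ⊕ Fin n) (Fin n ⊕ Fin n) ℝ) = fromBlocks (-1) 0 0 (-1) by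
      rw [← fromBlocks_one, Matrix.fromBlocks_neg]; simp]
    simp [symplJ, fromBlocks_multiply]
  have hleft : (-(symplJ n ℝ) * γᵀ * symplJ n ℝ) * γ = 1 := by
    have : (-(symplJ n ℝ) * γᵀ * symplJ n ℝ) * γ = -(symplJ n ℝ) * (γᵀ * symplJ n ℝ * γ) := by
      simp only [mul_assoc]
    rw [this, hγ, neg_mul, hJJ, neg_neg]
  have hinv : γ⁻¹ = -(symplJ n ℝ) * γᵀ * symplJ n ℝ := inv_eq_left_inv hleft
  have hleft' : γ⁻¹ * γ = 1 := by rw [hinv]; exact hleft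
  have hright : γ * γ⁻¹ = 1 := mul_eq_one_comm.mp hleft'
  set E : Matrix (Fin n ⊕ Fin n) (Fin n ⊕ Fin n) ℝ := fromBlocks 1 0 0 (-1) with hE
  have hEt : Eᵀ = E := by simp [hE, fromBlocks_transpose]
  have hEJE : E * symplJ n ℝ * E = -(symplJ n ℝ) := by
    rw [symplJ, Matrix.fromBlocks_neg]
    simp [hE, fromBlocks_multiply]
  have hEE : E * E = 1 := by
    rw [← fromBlocks_one]
    simp [hE, fromBlocks_multiply]
  have hinvJ : γ⁻¹ᵀ * symplJ n ℝ * γ⁻¹ = symplJ n ℝ := by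
    have h5 : γ⁻¹ᵀ * γᵀ = 1 := by rw [← transpose_mul, hright, transpose_one]
    calc γ⁻¹ᵀ * symplJ n ℝ * γ⁻¹ = γ⁻¹ᵀ * (γᵀ * symplJ n ℝ * γ) * γ⁻¹ := by rw [hγ]
    _ = (γ⁻¹ᵀ * γᵀ) * symplJ n ℝ * (γ * γ⁻¹) := by simp only [mul_assoc]
    _ = symplJ n ℝ := by rw [h5, hright, one_mul, mul_one]
  have hsympl' : IsSymplectic γ' := by
    rw [IsSymplectic, hγ'def]
    calc (E * γ⁻¹ * E)ᵀ * symplJ n ℝ * (E * γ⁻¹ * E)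
        = E * (γ⁻¹ᵀ * (E * symplJ n ℝ * E) * γ⁻¹) * E := by
          simp only [transpose_mul, hEt, mul_assoc]
    _ = symplJ n ℝ := by
          rw [hEJE]
          have h7 : E * (γ⁻¹ᵀ * -(symplJ n ℝ) * γ⁻¹) * E
              = -(E * (γ⁻¹ᵀ * symplJ n ℝ * γ⁻¹) * E) := by
            simp [mul_neg, neg_mul]
          rw [h7, hinvJ, hEJE, neg_neg]
  -- blocks of γ'
  have hγeq : γ = fromBlocks γ.toBlocks₁₁ γ.toBlocks₁₂ γ.toBlocks₂₁ γ.toBlocks₂₂ :=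
    (fromBlocks_toBlocks γ).symm
  have hblocks : γ' = fromBlocks (γ.toBlocks₂₂)ᵀ (γ.toBlocks₁₂)ᵀ (γ.toBlocks₂₁)ᵀ (γ.toBlocks₁₁)ᵀ := by
    rw [hγ'def, hinv]
    conv_lhs => rw [hγeq]
    rw [symplJ, Matrix.fromBlocks_neg, fromBlocks_transpose]
    simp [hE, fromBlocks_multiply]
  refine ⟨hsympl', ?_⟩
  set A := (γ.toBlocks₁₁).map (Complex.ofReal) with hA
  set B := (γ.toBlocks₁₂).map (Complex.ofReal) with hB
  set C := (γ.toBlocks₂₁).map (Complex.ofReal) with hC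
  set D := (γ.toBlocks₂₂).map (Complex.ofReal) with hD
  have ha' : (γ'.toBlocks₁₁).map (Complex.ofReal) = Dᵀ := by
    rw [hblocks, toBlocks_fromBlocks₁₁, Matrix.transpose_map, hD]
  have hb' : (γ'.toBlocks₁₂).map (Complex.ofReal) = Bᵀ := by
    rw [hblocks, toBlocks_fromBlocks₁₂, Matrix.transpose_map, hB]
  have hc' : (γ'.toBlocks₂₁).map (Complex.ofReal) = Cᵀ := by
    rw [hblocks, toBlocks_fromBlocks₂₁, Matrix.transpose_map, hC]
  have hd' : (γ'.toBlocks₂₂).map (Complex.ofReal) = Aᵀ := by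
    rw [hblocks, toBlocks_fromBlocks₂₂, Matrix.transpose_map, hA]
  rw [hc', hd'] at h2 ⊢
  have key1 : (siegelAct γ z + w).det * (C * z + D).det
      = (A * z + B + w * (C * z + D)).det := by
    rw [← det_mul]
    congr 1
    rw [siegelAct, ← hA, ← hB, ← hC, ← hD, add_mul, mul_assoc,
      nonsing_inv_mul _ h1, mul_one]
  have key2 : (siegelAct γ' w + z).det * (Cᵀ * w + Aᵀ).det
      = (Dᵀ * w + Bᵀ + z * (Cᵀ * w + Aᵀ)).det := by
    rw [← det_mul]
    congr 1
    rw [siegelAct, ha', hb', hc', hd', add_mul, mul_assoc,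
      nonsing_inv_mul _ h2, mul_one]
  have heq : Dᵀ * w + Bᵀ + z * (Cᵀ * w + Aᵀ) = (A * z + B + w * (C * z + D))ᵀ := by
    have hzs : zᵀ = z := hz.1
    have hws : wᵀ = w := hw.1
    simp only [transpose_add, transpose_mul, hzs, hws, mul_add, add_mul, mul_assoc]
    abel
  rw [mul_comm _ (siegelAct γ z + w).det, mul_comm _ (siegelAct γ' w + z).det,
    key1, key2, heq, det_transpose]
end
end

section
/- Let γ ∈ Sp_n(ℤ) with lower blocks c = c_γ and d = d_γ in M_n(ℤ), and let r be the rank of c regarded as a matrix over ℚ. Then there exist matrices U₁, U₂ ∈ GL_n(ℤ) and matrices c₁, d₁ ∈ M_r(ℤ) with det(c₁) ≠ 0 and c₁ d₁ᵀ symmetric, such that c = U₁ · [[c₁, 0],[0, 0]] · U₂ᵀ and d = U₁ · [[d₁, 0],[0, I_{n−r}]] · U₂⁻¹, where the block matrices have diagonal blocks of sizes r and n − r. -/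
open Matrix

noncomputable section

/-- Cancel an integer matrix with nonzero determinant on the left of a zero product. -/
lemma cancel_left_of_det_ne_zero {r s : ℕ} {c₁ : Matrix (Fin r) (Fin r) ℤ} (h : c₁.det ≠ 0)
    {X : Matrix (Fin r) (Fin s) ℤ} (hX : c₁ * X = 0) : X = 0 := by
  have h2 : c₁.adjugate * (c₁ * X) = 0 := by rw [hX, Matrix.mul_zero]
  rw [← Matrix.mul_assoc, Matrix.adjugate_mul, Matrix.smul_mul, Matrix.one_mul] at h2
  ext i j
  have h3 := congrFun (congrFun h2 i) j
  simp only [Matrix.smul_apply, smul_eq_mul, Matrix.zero_apply] at h3 ⊢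
  rcases mul_eq_zero.mp h3 with h' | h'
  · exact absurd h' h
  · exact h'

lemma reindex_mul_reindex {ι κ : Type*} [Fintype ι] [Fintype κ] [DecidableEq ι] [DecidableEq κ]
    (e : ι ≃ κ) (A B : Matrix ι ι ℤ) :
    (Matrix.reindex e e A) * (Matrix.reindex e e B) = Matrix.reindex e e (A * B) := by
  simp [Matrix.reindex_apply, Matrix.submatrix_mul_equiv]

lemma reindex_sub {ι κ : Type*} (e : ι ≃ κ) (A B : Matrix ι ι ℤ) :
    Matrix.reindex e e (A - B) = Matrix.reindex e e A - Matrix.reindex e e B := by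
  simp [Matrix.reindex_apply, Matrix.submatrix_sub]

lemma reindex_one {ι κ : Type*} [Fintype ι] [Fintype κ] [DecidableEq ι] [DecidableEq κ]
    (e : ι ≃ κ) : Matrix.reindex e e (1 : Matrix ι ι ℤ) = 1 := by
  simp [Matrix.reindex_apply, Matrix.submatrix_one_equiv]

lemma reindex_transpose {ι κ : Type*} (e : ι ≃ κ) (A : Matrix ι ι ℤ) :
    Matrix.reindex e e Aᵀ = (Matrix.reindex e e A)ᵀ := by
  simp [Matrix.reindex_apply, Matrix.transpose_submatrix]

lemma reindex_reindex_symm {ι κ : Type*} (e : ι ≃ κ) (A : Matrix κ κ ℤ) :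
    Matrix.reindex e e (Matrix.reindex e.symm e.symm A) = A := by
  simp

lemma fromBlocks_sub' {l m o p : Type*} (A A' : Matrix l m ℤ) (B B' : Matrix l o ℤ)
    (C C' : Matrix p m ℤ) (D D' : Matrix p o ℤ) :
    Matrix.fromBlocks A B C D - Matrix.fromBlocks A' B' C' D'
      = Matrix.fromBlocks (A - A') (B - B') (C - C') (D - D') := by
  rw [sub_eq_add_neg, Matrix.fromBlocks_neg, Matrix.fromBlocks_add]
  simp [sub_eq_add_neg]

/-- A Smith-normal-form style factorization of an integer matrix. -/
lemma exists_snf {n : ℕ} (c : Matrix (Fin n) (Fin n) ℤ) :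
    ∃ (m k : ℕ), m + k = n ∧ ∀ (e : Fin m ⊕ Fin k ≃ Fin n),
      ∃ (U V : Matrix (Fin n) (Fin n) ℤ) (g : Fin m → ℤ),
        IsUnit U.det ∧ IsUnit V.det ∧ (∀ i, g i ≠ 0) ∧
        c = U * (Matrix.reindex e e
          (Matrix.fromBlocks (Matrix.diagonal g) 0 0 (0 : Matrix (Fin k) (Fin k) ℤ))) * V := by
  classical
  set φ : (Fin n → ℤ) →ₗ[ℤ] (Fin n → ℤ) := c.mulVecLin with hφdef
  obtain ⟨m, snf⟩ := (LinearMap.range φ).smithNormalForm (Pi.basisFun ℤ (Fin n))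
  obtain ⟨k, bK⟩ := (LinearMap.ker φ).basisOfPid (Pi.basisFun ℤ (Fin n))
  -- a section of φ on its range
  have hmem : ∀ i, (snf.bN i : Fin n → ℤ) ∈ LinearMap.range φ := fun i => (snf.bN i).2
  choose pre hpre using hmem
  set ψ : (LinearMap.range φ) →ₗ[ℤ] (Fin n → ℤ) := snf.bN.constr ℤ pre with hψdef
  have hψ : ∀ y : LinearMap.range φ, φ (ψ y) = (y : Fin n → ℤ) := by
    have hcomp : φ.comp ψ = (LinearMap.range φ).subtype := by
      apply snf.bN.ext
      intro i
      simp [hψdef, Module.Basis.constr_basis, hpre]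
    intro y
    have := LinearMap.congr_fun hcomp y
    simpa using this
  have hψinj : Function.Injective ψ := by
    intro x y hxy
    exact Subtype.ext (by rw [← hψ x, ← hψ y, hxy])
  have hcompl : IsCompl (LinearMap.range ψ) (LinearMap.ker φ) := by
    constructor
    · rw [disjoint_iff_inf_le]
      rintro x hx
      obtain ⟨hx1, hx2⟩ := Submodule.mem_inf.mp hx
      obtain ⟨y, rfl⟩ := hx1
      have hy : (y : Fin n → ℤ) = 0 := by rw [← hψ y]; exact LinearMap.mem_ker.mp hx2
      have hy0 : y = 0 := Subtype.ext hy
      simp [hy0, Submodule.mem_bot]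
    · rw [codisjoint_iff_le_sup]
      intro x _
      have h1 : ψ (φ.rangeRestrict x) ∈ LinearMap.range ψ := ⟨_, rfl⟩
      have h2 : x - ψ (φ.rangeRestrict x) ∈ LinearMap.ker φ := by
        rw [LinearMap.mem_ker, map_sub, hψ (φ.rangeRestrict x)]
        simp
      have h3 := Submodule.add_mem_sup h1 h2
      have hsum : ψ (φ.rangeRestrict x) + (x - ψ (φ.rangeRestrict x)) = x := by abel
      rwa [hsum] at h3
  set bR : Module.Basis (Fin m) ℤ (LinearMap.range ψ) :=
    snf.bN.map (LinearEquiv.ofInjective ψ hψinj) with hbRdef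
  set bfull : Module.Basis (Fin m ⊕ Fin k) ℤ (Fin n → ℤ) :=
    (bR.prod bK).map (Submodule.prodEquivOfIsCompl _ _ hcompl) with hbfulldef
  have hbfull_inl : ∀ i, bfull (Sum.inl i) = ψ (snf.bN i) := by
    intro i
    rw [hbfulldef, Module.Basis.map_apply, Submodule.coe_prodEquivOfIsCompl']
    rw [Module.Basis.prod_apply_inl_fst, Module.Basis.prod_apply_inl_snd]
    simp [hbRdef, LinearEquiv.ofInjective_apply]
  have hbfull_inr : ∀ j, bfull (Sum.inr j) = (bK j : Fin n → ℤ) := by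
    intro j
    rw [hbfulldef, Module.Basis.map_apply, Submodule.coe_prodEquivOfIsCompl']
    rw [Module.Basis.prod_apply_inr_fst, Module.Basis.prod_apply_inr_snd]
    simp
  have hφ_inl : ∀ i, φ (bfull (Sum.inl i)) = snf.a i • snf.bM (snf.f i) := by
    intro i
    rw [hbfull_inl, hψ]
    exact snf.snf i
  have hφ_inr : ∀ j, φ (bfull (Sum.inr j)) = 0 := by
    intro j
    rw [hbfull_inr]
    exact LinearMap.mem_ker.mp (bK j).2
  have hcard : m + k = n := by
    have e0 := bfull.indexEquiv (Pi.basisFun ℤ (Fin n))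
    have := Fintype.card_congr e0
    simpa using this
  have ha : ∀ i, snf.a i ≠ 0 := by
    intro i h
    have h1 := snf.snf i
    rw [h, zero_smul] at h1
    exact (snf.bN.ne_zero i) (by exact_mod_cast Subtype.ext h1)
  refine ⟨m, k, hcard, fun e => ?_⟩
  -- a permutation π with π (snf.f i) = e (Sum.inl i)
  have hinj1 : Function.Injective (fun i => e (Sum.inl i) : Fin m → Fin n) :=
    fun i j hij => Sum.inl_injective (e.injective hij)
  set eq1 : {x : Fin n // x ∈ Set.range snf.f} ≃
      {x : Fin n // x ∈ Set.range (fun i => e (Sum.inl i))} :=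
    (Equiv.ofInjective snf.f snf.f.injective).symm.trans (Equiv.ofInjective _ hinj1) with heq1
  set π : Equiv.Perm (Fin n) := eq1.extendSubtype with hπdef
  have hπ : ∀ i, π (snf.f i) = e (Sum.inl i) := by
    intro i
    have hmem' : snf.f i ∈ Set.range snf.f := ⟨i, rfl⟩
    rw [hπdef, Equiv.extendSubtype_apply_of_mem eq1 _ hmem']
    have h5 : (⟨snf.f i, hmem'⟩ : {x : Fin n // x ∈ Set.range snf.f})
        = Equiv.ofInjective snf.f snf.f.injective i := rfl
    rw [h5, heq1, Equiv.trans_apply, Equiv.symm_apply_apply]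
    rfl
  set btgt : Module.Basis (Fin n) ℤ (Fin n → ℤ) := snf.bM.reindex π with hbtgt
  set bsrc : Module.Basis (Fin n) ℤ (Fin n → ℤ) := bfull.reindex e with hbsrc
  have hD : LinearMap.toMatrix bsrc btgt φ
      = Matrix.diagonal (fun t : Fin n => Sum.elim snf.a (fun _ => 0) (e.symm t)) := by
    ext t s
    rw [LinearMap.toMatrix_apply]
    obtain ⟨s', rfl⟩ : ∃ s', e s' = s := ⟨e.symm s, e.apply_symm_apply s⟩
    have hbsrc' : bsrc (e s') = bfull s' := by simp [hbsrc]
    rw [hbsrc']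
    cases s' with
    | inl i =>
      rw [hφ_inl i]
      have hb : snf.bM (snf.f i) = btgt (e (Sum.inl i)) := by
        rw [hbtgt, Module.Basis.reindex_apply]
        congr 1
        rw [eq_comm, Equiv.symm_apply_eq, hπ i]
      rw [hb, _root_.map_smul, Module.Basis.repr_self]
      by_cases ht : t = e (Sum.inl i)
      · simp [ht, Matrix.diagonal_apply, Finsupp.single_apply]
      · simp [Matrix.diagonal_apply, Finsupp.single_apply, ht, Ne.symm ht]
    | inr j =>
      rw [hφ_inr j, map_zero]
      by_cases ht : t = e (Sum.inr j)
      · simp [ht, Matrix.diagonal_apply]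
      · simp [Matrix.diagonal_apply, ht]
  have hblockdiag : (Matrix.reindex e e
      (Matrix.fromBlocks (Matrix.diagonal snf.a) 0 0 (0 : Matrix (Fin k) (Fin k) ℤ)))
      = Matrix.diagonal (fun t : Fin n => Sum.elim snf.a (fun _ => 0) (e.symm t)) := by
    have h1 : (Matrix.fromBlocks (Matrix.diagonal snf.a) 0 0 (0 : Matrix (Fin k) (Fin k) ℤ))
        = Matrix.diagonal (Sum.elim snf.a (fun _ => (0:ℤ))) := by
      rw [← Matrix.diagonal_zero, Matrix.fromBlocks_diagonal]
    rw [h1]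
    ext s t
    simp only [Matrix.reindex_apply, Matrix.submatrix_apply, Matrix.diagonal_apply,
      e.symm.injective.eq_iff]
  have hc : (Pi.basisFun ℤ (Fin n)).toMatrix btgt * LinearMap.toMatrix bsrc btgt φ *
      bsrc.toMatrix (Pi.basisFun ℤ (Fin n)) = c := by
    rw [basis_toMatrix_mul_linearMap_toMatrix_mul_basis_toMatrix,
      LinearMap.toMatrix_eq_toMatrix']
    exact LinearMap.toMatrix'_toLin' c
  have hPunit : IsUnit ((Pi.basisFun ℤ (Fin n)).toMatrix btgt).det := by
    apply IsUnit.of_mul_eq_one (btgt.toMatrix (Pi.basisFun ℤ (Fin n))).det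
    rw [← Matrix.det_mul, Module.Basis.toMatrix_mul_toMatrix_flip, Matrix.det_one]
  have hQunit : IsUnit (bsrc.toMatrix (Pi.basisFun ℤ (Fin n))).det := by
    apply IsUnit.of_mul_eq_one ((Pi.basisFun ℤ (Fin n)).toMatrix bsrc).det
    rw [← Matrix.det_mul, Module.Basis.toMatrix_mul_toMatrix_flip, Matrix.det_one]
  refine ⟨_, _, snf.a, hPunit, hQunit, ha, ?_⟩
  rw [hblockdiag, ← hD]
  exact hc.symm

theorem statement3 {n : ℕ} (γ : Matrix (Fin n ⊕ Fin n) (Fin n ⊕ Fin n) ℤ)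
    (hγ : IsSymplectic γ) (r : ℕ) (hr : r ≤ n)
    (hrank : ((γ.toBlocks₂₁).map (Int.cast : ℤ → ℚ)).rank = r) :
    ∃ (U₁ U₂ : Matrix (Fin n) (Fin n) ℤ), IsUnit U₁.det ∧ IsUnit U₂.det ∧
      ∃ (c₁ d₁ : Matrix (Fin r) (Fin r) ℤ), c₁.det ≠ 0 ∧ (c₁ * d₁ᵀ).IsSymm ∧
        γ.toBlocks₂₁ = U₁ *
          (Matrix.reindex (finSumFinEquiv.trans (finCongr (Nat.add_sub_cancel' hr)))
            (finSumFinEquiv.trans (finCongr (Nat.add_sub_cancel' hr)))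
            (Matrix.fromBlocks c₁ 0 0 (0 : Matrix (Fin (n - r)) (Fin (n - r)) ℤ))) * U₂ᵀ ∧
        γ.toBlocks₂₂ = U₁ *
          (Matrix.reindex (finSumFinEquiv.trans (finCongr (Nat.add_sub_cancel' hr)))
            (finSumFinEquiv.trans (finCongr (Nat.add_sub_cancel' hr)))
            (Matrix.fromBlocks d₁ 0 0 (1 : Matrix (Fin (n - r)) (Fin (n - r)) ℤ))) * U₂⁻¹ := by
  classical
  -- Part 1: symplectic block identities
  set J := symplJ n ℤ with hJdef
  have hγ' : γᵀ * J * γ = J := hγ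
  have hJJ : J * J = -1 := by
    have h0 : (-1 : Matrix (Fin n ⊕ Fin n) (Fin n ⊕ Fin n) ℤ)
        = Matrix.fromBlocks (-1) 0 0 (-1) := by
      rw [← Matrix.fromBlocks_one, Matrix.fromBlocks_neg]
      simp
    rw [h0, hJdef]
    show Matrix.fromBlocks 0 (-1) 1 0 * Matrix.fromBlocks 0 (-1) 1 0 = _
    rw [Matrix.fromBlocks_multiply]
    simp
  have hL : (-(J * γᵀ * J)) * γ = 1 := by
    calc (-(J * γᵀ * J)) * γ = -(J * (γᵀ * J * γ)) := by noncomm_ring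
      _ = -(J * J) := by rw [hγ']
      _ = 1 := by rw [hJJ, neg_neg]
  have hR : γ * (-(J * γᵀ * J)) = 1 := mul_eq_one_comm.mp hL
  have h1 : γ * J * γᵀ * J = -1 := by
    calc γ * J * γᵀ * J = -(γ * (-(J * γᵀ * J))) := by noncomm_ring
      _ = -1 := by rw [hR]
  have h2 : J * (-J) = 1 := by rw [Matrix.mul_neg, hJJ, neg_neg]
  have hgJgt : γ * J * γᵀ = J := by
    calc γ * J * γᵀ = γ * J * γᵀ * (J * (-J)) := by rw [h2, Matrix.mul_one]
      _ = (γ * J * γᵀ * J) * (-J) := by noncomm_ring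
      _ = (-1) * (-J) := by rw [h1]
      _ = J := by noncomm_ring
  set aM := γ.toBlocks₁₁ with haM
  set bM := γ.toBlocks₁₂ with hbM
  set cM := γ.toBlocks₂₁ with hcM
  set dM := γ.toBlocks₂₂ with hdM
  have hγb : γ = Matrix.fromBlocks aM bM cM dM := (Matrix.fromBlocks_toBlocks γ).symm
  rw [hγb, hJdef] at hgJgt
  rw [show symplJ n ℤ = Matrix.fromBlocks 0 (-1) 1 0 from rfl] at hgJgt
  rw [Matrix.fromBlocks_transpose, Matrix.fromBlocks_multiply, Matrix.fromBlocks_multiply]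
    at hgJgt
  simp only [Matrix.mul_zero, Matrix.zero_mul, Matrix.mul_one, Matrix.one_mul,
    Matrix.mul_neg, Matrix.neg_mul, add_zero, zero_add] at hgJgt
  have h21 := congrArg Matrix.toBlocks₂₁ hgJgt
  have h22 := congrArg Matrix.toBlocks₂₂ hgJgt
  simp only [Matrix.toBlocks_fromBlocks₂₁, Matrix.toBlocks_fromBlocks₂₂] at h21 h22
  -- h21 : dM * aMᵀ + -(cM * bMᵀ) = 1 ; h22 : dM * cMᵀ + -(cM * dMᵀ) = 0
  have hcd : cM * dMᵀ = dM * cMᵀ := by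
    have := h22
    rw [add_neg_eq_zero] at this
    exact this.symm
  have hadbc : aM * dMᵀ - bM * cMᵀ = 1 := by
    have h21t := congrArg Matrix.transpose h21
    simp only [Matrix.transpose_add, Matrix.transpose_neg, Matrix.transpose_mul,
      Matrix.transpose_one, Matrix.transpose_transpose] at h21t
    rw [← h21t]
    noncomm_ring
  -- Part 2: Smith normal form of cM and rank computation
  obtain ⟨m, k, hmk, hall⟩ := exists_snf cM
  have hm : m = r := by
    obtain ⟨U, V, g, hU, hV, hg, hfact⟩ := hall (finSumFinEquiv.trans (finCongr hmk))
    set e := finSumFinEquiv.trans (finCongr hmk)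
    have hrank' : ((U * (Matrix.reindex e e (Matrix.fromBlocks (Matrix.diagonal g) 0 0
        (0 : Matrix (Fin k) (Fin k) ℤ))) * V).map (Int.castRingHom ℚ)).rank = r := by
      rw [← hfact]; exact hrank
    rw [Matrix.map_mul (f := Int.castRingHom ℚ), Matrix.map_mul (f := Int.castRingHom ℚ)]
      at hrank'
    rw [Matrix.rank_mul_eq_left_of_isUnit_det _ _
        (by have hh := (Int.castRingHom ℚ).map_det V
            rw [RingHom.mapMatrix_apply] at hh
            rw [← hh]; exact hV.map (Int.castRingHom ℚ))] at hrank'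
    rw [Matrix.rank_mul_eq_right_of_isUnit_det _ _
        (by have hh := (Int.castRingHom ℚ).map_det U
            rw [RingHom.mapMatrix_apply] at hh
            rw [← hh]; exact hU.map (Int.castRingHom ℚ))] at hrank'
    rw [show ((Matrix.reindex e e
        (Matrix.fromBlocks (Matrix.diagonal g) 0 0 (0 : Matrix (Fin k) (Fin k) ℤ))).map
          (Int.castRingHom ℚ))
        = Matrix.reindex e e ((Matrix.fromBlocks (Matrix.diagonal g) 0 0
          (0 : Matrix (Fin k) (Fin k) ℤ)).map (Int.castRingHom ℚ)) from
      (Matrix.submatrix_map _ _ _ _).symm] at hrank'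
    rw [Matrix.rank_reindex] at hrank'
    rw [show ((Matrix.fromBlocks (Matrix.diagonal g) 0 0
        (0 : Matrix (Fin k) (Fin k) ℤ)).map (Int.castRingHom ℚ))
        = Matrix.diagonal (Sum.elim (fun i => ((g i : ℚ))) (fun _ : Fin k => (0:ℚ))) from ?_]
      at hrank'
    · rw [Matrix.rank_diagonal] at hrank'
      rw [← hrank']
      rw [Fintype.card_congr (Equiv.subtypeSum
        (p := fun x : Fin m ⊕ Fin k =>
          Sum.elim (fun i => ((g i : ℚ))) (fun _ : Fin k => (0:ℚ)) x ≠ 0)),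
        Fintype.card_sum]
      have hcard1 : Fintype.card
          {a : Fin m // Sum.elim (fun i => ((g i : ℚ))) (fun _ : Fin k => (0:ℚ))
            (Sum.inl a) ≠ 0} = m := by
        rw [Fintype.card_congr (Equiv.subtypeUnivEquiv (fun a => by
          simp [Int.cast_ne_zero, hg a]))]
        exact Fintype.card_fin m
      have hcard2 : Fintype.card
          {b : Fin k // Sum.elim (fun i => ((g i : ℚ))) (fun _ : Fin k => (0:ℚ))
            (Sum.inr b) ≠ 0} = 0 :=
        Fintype.card_eq_zero_iff.mpr ⟨fun x => x.2 (by simp)⟩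
      rw [hcard1, hcard2]
      omega
    · rw [Matrix.fromBlocks_map]
      rw [Matrix.diagonal_map (by simp), ← Matrix.fromBlocks_diagonal]
      simp
  subst hm
  have hk : k = n - m := by omega
  subst hk
  -- Part 3: assembly
  set σ : Fin m ⊕ Fin (n - m) ≃ Fin n :=
    finSumFinEquiv.trans (finCongr (Nat.add_sub_cancel' hr)) with hσdef
  obtain ⟨U, V, g, hU, hV, hg, hfact⟩ := hall σ
  set c₁ : Matrix (Fin m) (Fin m) ℤ := Matrix.diagonal g with hc₁def
  set C : Matrix (Fin m ⊕ Fin (n - m)) (Fin m ⊕ Fin (n - m)) ℤ :=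
    Matrix.fromBlocks c₁ 0 0 0 with hCdef
  have hc₁ : c₁.det ≠ 0 := by
    rw [hc₁def, Matrix.det_diagonal]
    exact Finset.prod_ne_zero_iff.mpr (fun i _ => hg i)
  have hVt : IsUnit (Vᵀ).det := by rwa [Matrix.det_transpose]
  have hUt : IsUnit (Uᵀ).det := by rwa [Matrix.det_transpose]
  set E : Matrix (Fin m ⊕ Fin (n - m)) (Fin m ⊕ Fin (n - m)) ℤ :=
    Matrix.reindex σ.symm σ.symm (U⁻¹ * dM * Vᵀ) with hEdef
  have hEn : Matrix.reindex σ σ E = U⁻¹ * dM * Vᵀ := by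
    rw [hEdef]
    simp
  have hdE : dM = U * (Matrix.reindex σ σ E) * (Vᵀ)⁻¹ := by
    rw [hEn, Matrix.mul_assoc U, Matrix.mul_nonsing_inv_cancel_right _ _ hVt,
      Matrix.mul_nonsing_inv_cancel_left _ _ hU]
  -- the relation C Eᵀ = E Cᵀ
  have cancelU : ∀ {X Y : Matrix (Fin n) (Fin n) ℤ}, U * X * Uᵀ = U * Y * Uᵀ → X = Y := by
    intro X Y hXY
    calc X = (U⁻¹ * U) * X * (Uᵀ * (Uᵀ)⁻¹) := by
          rw [Matrix.nonsing_inv_mul _ hU, Matrix.mul_nonsing_inv _ hUt,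
            Matrix.mul_one, Matrix.one_mul]
      _ = U⁻¹ * (U * X * Uᵀ) * (Uᵀ)⁻¹ := by noncomm_ring
      _ = U⁻¹ * (U * Y * Uᵀ) * (Uᵀ)⁻¹ := by rw [hXY]
      _ = (U⁻¹ * U) * Y * (Uᵀ * (Uᵀ)⁻¹) := by noncomm_ring
      _ = Y := by
          rw [Matrix.nonsing_inv_mul _ hU, Matrix.mul_nonsing_inv _ hUt,
            Matrix.mul_one, Matrix.one_mul]
  have hCE : C * Eᵀ = E * Cᵀ := by
    have e1 : cM * dMᵀ = U * ((Matrix.reindex σ σ C) * (Matrix.reindex σ σ E)ᵀ) * Uᵀ := by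
      rw [hfact, hdE]
      calc (U * Matrix.reindex σ σ C * V) * (U * Matrix.reindex σ σ E * (Vᵀ)⁻¹)ᵀ
          = U * Matrix.reindex σ σ C * (V * V⁻¹) * (Matrix.reindex σ σ E)ᵀ * Uᵀ := by
            rw [Matrix.transpose_mul, Matrix.transpose_mul, Matrix.transpose_nonsing_inv,
              Matrix.transpose_transpose]
            noncomm_ring
        _ = U * ((Matrix.reindex σ σ C) * (Matrix.reindex σ σ E)ᵀ) * Uᵀ := by
            rw [Matrix.mul_nonsing_inv _ hV]
            noncomm_ring
    have e2 : dM * cMᵀ = U * ((Matrix.reindex σ σ E) * (Matrix.reindex σ σ C)ᵀ) * Uᵀ := by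
      rw [hfact, hdE]
      calc (U * Matrix.reindex σ σ E * (Vᵀ)⁻¹) * (U * Matrix.reindex σ σ C * V)ᵀ
          = U * Matrix.reindex σ σ E * ((Vᵀ)⁻¹ * Vᵀ) * (Matrix.reindex σ σ C)ᵀ * Uᵀ := by
            rw [Matrix.transpose_mul, Matrix.transpose_mul]
            noncomm_ring
        _ = U * ((Matrix.reindex σ σ E) * (Matrix.reindex σ σ C)ᵀ) * Uᵀ := by
            rw [Matrix.nonsing_inv_mul _ hVt]
            noncomm_ring
    have e3 := e1.symm.trans (hcd.trans e2)
    have e4 := cancelU e3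
    have e5 : Matrix.reindex σ σ (C * Eᵀ) = Matrix.reindex σ σ (E * Cᵀ) := by
      rw [← reindex_mul_reindex σ, ← reindex_mul_reindex σ, reindex_transpose,
        reindex_transpose]
      exact e4
    exact (Matrix.reindex σ σ).injective e5
  -- blocks of E
  set E11 := E.toBlocks₁₁ with hE11
  set E12 := E.toBlocks₁₂ with hE12
  set E21 := E.toBlocks₂₁ with hE21def
  set E22 := E.toBlocks₂₂ with hE22def
  have hEb : E = Matrix.fromBlocks E11 E12 E21 E22 := (Matrix.fromBlocks_toBlocks E).symm
  have hCE' := hCE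
  rw [hEb, hCdef] at hCE'
  rw [Matrix.fromBlocks_transpose, Matrix.fromBlocks_transpose,
    Matrix.fromBlocks_multiply, Matrix.fromBlocks_multiply] at hCE'
  simp only [Matrix.mul_zero, Matrix.zero_mul, Matrix.transpose_zero, add_zero, zero_add]
    at hCE'
  have h11 := congrArg Matrix.toBlocks₁₁ hCE'
  have h12 := congrArg Matrix.toBlocks₁₂ hCE'
  simp only [Matrix.toBlocks_fromBlocks₁₁, Matrix.toBlocks_fromBlocks₁₂] at h11 h12
  -- h11 : c₁ * E11ᵀ = E11 * c₁ᵀ ; h12 : c₁ * E21ᵀ = 0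
  have hE21 : E21 = 0 := by
    have := cancel_left_of_det_ne_zero hc₁ h12
    rwa [Matrix.transpose_eq_zero] at this
  -- E22 is invertible
  have h2n : (Uᵀ * aM * V⁻¹) * (Matrix.reindex σ σ E)ᵀ
      - (Uᵀ * bM * Vᵀ) * (Matrix.reindex σ σ C)ᵀ = 1 := by
    have h := hadbc
    rw [hfact, hdE] at h
    simp only [Matrix.transpose_mul, Matrix.transpose_nonsing_inv,
      Matrix.transpose_transpose] at h
    have h' : (aM * V⁻¹ * (Matrix.reindex σ σ E)ᵀ - bM * Vᵀ * (Matrix.reindex σ σ C)ᵀ) * Uᵀ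
        = 1 := by
      rw [← h]
      noncomm_ring
    have h'' := mul_eq_one_comm.mp h'
    rw [← h'']
    noncomm_ring
  have h2b : (Matrix.reindex σ.symm σ.symm (Uᵀ * aM * V⁻¹)) * Eᵀ
      - (Matrix.reindex σ.symm σ.symm (Uᵀ * bM * Vᵀ)) * Cᵀ = 1 := by
    apply (Matrix.reindex σ σ).injective
    rw [reindex_sub, reindex_one, ← reindex_mul_reindex σ, ← reindex_mul_reindex σ,
      reindex_reindex_symm, reindex_reindex_symm, reindex_transpose, reindex_transpose]
    exact h2n
  have hXE : (Matrix.reindex σ.symm σ.symm (Uᵀ * aM * V⁻¹)).toBlocks₂₂ * E22ᵀ = 1 := by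
    have h := h2b
    set X := Matrix.reindex σ.symm σ.symm (Uᵀ * aM * V⁻¹) with hXdef
    set Y := Matrix.reindex σ.symm σ.symm (Uᵀ * bM * Vᵀ) with hYdef
    rw [hEb, hE21, hCdef,
      (Matrix.fromBlocks_toBlocks X).symm, (Matrix.fromBlocks_toBlocks Y).symm] at h
    rw [Matrix.fromBlocks_transpose, Matrix.fromBlocks_transpose,
      Matrix.fromBlocks_multiply, Matrix.fromBlocks_multiply, ← Matrix.fromBlocks_one] at h
    have h4 : (Matrix.fromBlocks _ _ _ _ - Matrix.fromBlocks _ _ _ _ : Matrix _ _ ℤ) = _ := h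
    rw [fromBlocks_sub'] at h4
    have h5 := congrArg Matrix.toBlocks₂₂ h4
    simp only [Matrix.toBlocks_fromBlocks₂₂, Matrix.transpose_zero, Matrix.mul_zero,
      Matrix.zero_mul, add_zero, zero_add] at h5
    rw [sub_eq_iff_eq_add] at h5
    simpa using h5
  have hE22 : IsUnit E22.det := by
    have hdet := congrArg Matrix.det hXE
    rw [Matrix.det_mul, Matrix.det_one, Matrix.det_transpose] at hdet
    exact IsUnit.of_mul_eq_one _ ((mul_comm _ _).trans hdet)
  -- final matrices
  set W : Matrix (Fin m ⊕ Fin (n - m)) (Fin m ⊕ Fin (n - m)) ℤ :=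
    Matrix.fromBlocks 1 (E12 * E22⁻¹) 0 1 with hWdef
  set K : Matrix (Fin m ⊕ Fin (n - m)) (Fin m ⊕ Fin (n - m)) ℤ :=
    Matrix.fromBlocks 1 0 0 E22 with hKdef
  set D' : Matrix (Fin m ⊕ Fin (n - m)) (Fin m ⊕ Fin (n - m)) ℤ :=
    Matrix.fromBlocks E11 0 0 1 with hD'def
  have hWdet : W.det = 1 := by
    rw [hWdef, Matrix.det_fromBlocks_zero₂₁]
    simp
  have hKdet : IsUnit (Matrix.reindex σ σ K).det := by
    rw [Matrix.det_reindex_self, hKdef, Matrix.det_fromBlocks_zero₂₁]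
    simpa using hE22
  have hKtdet : IsUnit ((Matrix.reindex σ σ K)ᵀ).det := by rwa [Matrix.det_transpose]
  refine ⟨U * Matrix.reindex σ σ W, Vᵀ * (Matrix.reindex σ σ K)⁻¹, ?_, ?_, c₁, E11, hc₁,
    ?_, ?_, ?_⟩
  · rw [Matrix.det_mul, Matrix.det_reindex_self, hWdet, mul_one]
    exact hU
  · rw [Matrix.det_mul]
    exact hVt.mul (Matrix.isUnit_nonsing_inv_det _ hKdet)
  · show (c₁ * E11ᵀ)ᵀ = c₁ * E11ᵀ
    rw [Matrix.transpose_mul, Matrix.transpose_transpose]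
    exact h11.symm
  · -- identity for c
    rw [hfact]
    have e₁ : (Matrix.reindex σ σ W) * (Matrix.reindex σ σ C) = Matrix.reindex σ σ C := by
      rw [reindex_mul_reindex]
      congr 1
      rw [hWdef, hCdef, Matrix.fromBlocks_multiply]
      simp
    have h3 : (Matrix.reindex σ σ C) * (Matrix.reindex σ σ K)ᵀ = Matrix.reindex σ σ C := by
      rw [Matrix.transpose_reindex, reindex_mul_reindex]
      congr 1
      rw [hKdef, hCdef, Matrix.fromBlocks_transpose, Matrix.fromBlocks_multiply]
      simp
    have e₂ : (Matrix.reindex σ σ C) * ((Matrix.reindex σ σ K)ᵀ)⁻¹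
        = Matrix.reindex σ σ C := by
      conv_lhs => rw [← h3]
      rw [Matrix.mul_nonsing_inv_cancel_right _ _ hKtdet]
    rw [Matrix.transpose_mul, Matrix.transpose_nonsing_inv, Matrix.transpose_transpose]
    calc U * Matrix.reindex σ σ C * V
        = U * (Matrix.reindex σ σ W * Matrix.reindex σ σ C * ((Matrix.reindex σ σ K)ᵀ)⁻¹) * V
          := by rw [e₁, e₂]
      _ = U * Matrix.reindex σ σ W * Matrix.reindex σ σ C * (((Matrix.reindex σ σ K)ᵀ)⁻¹ * V)
          := by noncomm_ring
  · -- identity for d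
    rw [hdE]
    have hWDK : W * D' * K = E := by
      have hf : (E12 * E22⁻¹) * E22 = E12 := by
        rw [Matrix.mul_assoc, Matrix.nonsing_inv_mul _ hE22, Matrix.mul_one]
      rw [hEb, hE21, hWdef, hD'def, hKdef, Matrix.fromBlocks_multiply,
        Matrix.fromBlocks_multiply]
      simp [hf]
    have hU₂inv : (Vᵀ * (Matrix.reindex σ σ K)⁻¹)⁻¹
        = Matrix.reindex σ σ K * (Vᵀ)⁻¹ := by
      rw [Matrix.mul_inv_rev, Matrix.nonsing_inv_nonsing_inv _ hKdet]
    rw [hU₂inv]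
    calc U * Matrix.reindex σ σ E * (Vᵀ)⁻¹
        = U * (Matrix.reindex σ σ W * Matrix.reindex σ σ D' * Matrix.reindex σ σ K) * (Vᵀ)⁻¹
          := by rw [reindex_mul_reindex, reindex_mul_reindex, hWDK]
      _ = U * Matrix.reindex σ σ W * Matrix.reindex σ σ D' *
            (Matrix.reindex σ σ K * (Vᵀ)⁻¹) := by noncomm_ring
end
end

section
/- If r ≥ 1 and w is a complex symmetric r×r matrix whose imaginary part Im w (taken entrywise) is positive definite, then |det w| ≥ det(Im w). -/
open Matrix

noncomputable section

private lemma aux_det_sq_add_one {r : ℕ} (A : Matrix (Fin r) (Fin r) ℝ)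
    (hA : A.IsHermitian) : 1 ≤ (A ^ 2 + 1).det := by
  classical
  set U : Matrix (Fin r) (Fin r) ℝ := (hA.eigenvectorUnitary : Matrix (Fin r) (Fin r) ℝ)
  have hU1 : U * star U = 1 := (Matrix.mem_unitaryGroup_iff).mp hA.eigenvectorUnitary.2
  have hU2 : star U * U = 1 := (Matrix.mem_unitaryGroup_iff').mp hA.eigenvectorUnitary.2
  set D : Matrix (Fin r) (Fin r) ℝ := diagonal (RCLike.ofReal ∘ hA.eigenvalues)
  have hspec : A = U * D * star U := hA.spectral_theorem
  have key : A ^ 2 + 1 = U * (D * D + 1) * star U := by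
    have h1 : U * D * star U * (U * D * star U) = U * (D * D) * star U := by
      calc U * D * star U * (U * D * star U)
          = U * D * ((star U * U) * (D * star U)) := by simp only [mul_assoc]
        _ = U * (D * D) * star U := by rw [hU2, one_mul]; simp only [mul_assoc]
    have h2 : U * (D * D + 1) * star U = U * (D * D) * star U + 1 := by
      rw [Matrix.mul_add, mul_one, Matrix.add_mul, hU1]
    rw [hspec, pow_two, h1, h2]
  have hdetU : U.det * (star U).det = 1 := by
    rw [← det_mul, hU1, det_one]
  have hdd : (D * D + 1) = diagonal (fun i => hA.eigenvalues i ^ 2 + 1) := by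
    rw [diagonal_mul_diagonal, ← diagonal_one, diagonal_add]
    congr 1
    ext i
    simp [pow_two]
  have : (A ^ 2 + 1).det = ∏ i, (hA.eigenvalues i ^ 2 + 1) := by
    rw [key, det_mul, det_mul, mul_right_comm, hdetU, one_mul, hdd, det_diagonal]
  rw [this]
  calc (1:ℝ) = ∏ _i : Fin r, 1 := by simp
    _ ≤ ∏ i, (hA.eigenvalues i ^ 2 + 1) :=
        Finset.prod_le_prod (fun i _ => zero_le_one)
          (fun i _ => by nlinarith [sq_nonneg (hA.eigenvalues i)])

private lemma aux_abs_det {r : ℕ} (A : Matrix (Fin r) (Fin r) ℝ) (hA : A.IsHermitian) :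
    1 ≤ ‖(A.map (Complex.ofRealHom : ℝ →+* ℂ) + Complex.I • 1).det‖ := by
  classical
  set M : Matrix (Fin r) (Fin r) ℂ := A.map (Complex.ofRealHom : ℝ →+* ℂ) + Complex.I • 1
  have hconj : (starRingEnd ℂ) M.det = (M.map (starRingEnd ℂ)).det :=
    RingHom.map_det (starRingEnd ℂ) M
  have hMc : M.map (starRingEnd ℂ) = A.map (Complex.ofRealHom : ℝ →+* ℂ) - Complex.I • 1 := by
    ext i j
    simp [M, Matrix.one_apply, apply_ite, sub_eq_add_neg]
  have hprod : M * (M.map (starRingEnd ℂ)) = (A ^ 2 + 1).map (Complex.ofRealHom : ℝ →+* ℂ) := by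
    rw [hMc]
    have hmap : (A ^ 2 + 1).map (Complex.ofRealHom : ℝ →+* ℂ)
        = (A.map (Complex.ofRealHom : ℝ →+* ℂ)) * (A.map (Complex.ofRealHom : ℝ →+* ℂ)) + 1 := by
      have hmul : (A ^ 2).map (Complex.ofRealHom : ℝ →+* ℂ)
          = (A.map (Complex.ofRealHom : ℝ →+* ℂ)) * (A.map (Complex.ofRealHom : ℝ →+* ℂ)) := by
        rw [pow_two]; exact Matrix.map_mul
      have hadd : (A ^ 2 + 1).map (Complex.ofRealHom : ℝ →+* ℂ)
          = (A ^ 2).map (Complex.ofRealHom : ℝ →+* ℂ) + 1 := by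
        ext i j
        simp [Matrix.map_apply, Matrix.add_apply, Matrix.one_apply, apply_ite]
      rw [hadd, hmul]
    rw [hmap]
    set B := A.map (Complex.ofRealHom : ℝ →+* ℂ) with hBdef
    set c : Matrix (Fin r) (Fin r) ℂ := Complex.I • 1 with hc
    have h1 : c * c = -1 := by
      rw [hc, smul_mul_smul_comm, one_mul, Complex.I_mul_I, neg_smul, one_smul]
    have h2 : c * B = B * c := by
      rw [hc, smul_mul_assoc, one_mul, mul_smul_comm, mul_one]
    calc (B + c) * (B - c) = B * B - B * c + (c * B - c * c) := by
          rw [add_mul, mul_sub, mul_sub]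
      _ = B * B + 1 := by rw [h2, h1, sub_neg_eq_add]; abel
  have hns : (Complex.normSq M.det : ℂ) = ((A ^ 2 + 1).det : ℝ) := by
    rw [← Complex.mul_conj, hconj, ← det_mul, hprod]
    exact (RingHom.map_det (Complex.ofRealHom : ℝ →+* ℂ) (A ^ 2 + 1)).symm
  have hns' : Complex.normSq M.det = (A ^ 2 + 1).det := by
    exact_mod_cast hns
  have h1 : (1:ℝ) ≤ Complex.normSq M.det := hns' ▸ aux_det_sq_add_one A hA
  have habs : ‖M.det‖ ^ 2 = Complex.normSq M.det := Complex.sq_norm _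
  nlinarith [norm_nonneg M.det]

open scoped MatrixOrder in
private lemma aux_sqrt {r : ℕ} (y : Matrix (Fin r) (Fin r) ℝ) (hy : y.PosSemidef) :
    ∃ s : Matrix (Fin r) (Fin r) ℝ, s.IsHermitian ∧ s * s = y :=
  ⟨CFC.sqrt y, (CFC.sqrt_nonneg y).posSemidef.1, CFC.sqrt_mul_sqrt_self y hy.nonneg⟩

theorem statement4 {r : ℕ} (hr : 1 ≤ r) (w : Matrix (Fin r) (Fin r) ℂ)
    (hsymm : w.IsSymm) (hpos : (w.map Complex.im).PosDef) :
    (w.map Complex.im).det ≤ ‖w.det‖ := by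
  classical
  set y : Matrix (Fin r) (Fin r) ℝ := w.map Complex.im with hy
  set x : Matrix (Fin r) (Fin r) ℝ := w.map Complex.re with hx
  have hxsymm : xᵀ = x := by
    rw [hx, ← Matrix.transpose_map, hsymm.eq]
  -- square root of y
  obtain ⟨s, hsH, hss⟩ := aux_sqrt y hpos.posSemidef
  have hsT : sᵀ = s := by
    have := hsH
    rwa [Matrix.IsHermitian, conjTranspose_eq_transpose_of_trivial] at this
  have hydet : 0 < y.det := hpos.det_pos
  have hsdet : s.det ≠ 0 := by
    intro h
    rw [← hss, det_mul, h, mul_zero] at hydet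
    exact lt_irrefl _ hydet
  have hsinv : s⁻¹ * s = 1 := nonsing_inv_mul s (isUnit_iff_ne_zero.mpr hsdet)
  have hsinv' : s * s⁻¹ = 1 := mul_nonsing_inv s (isUnit_iff_ne_zero.mpr hsdet)
  set B : Matrix (Fin r) (Fin r) ℝ := s⁻¹ * x * s⁻¹ with hB
  have hBH : B.IsHermitian := by
    rw [Matrix.IsHermitian, conjTranspose_eq_transpose_of_trivial, hB,
      transpose_mul, transpose_mul, transpose_nonsing_inv, hsT, hxsymm, ← mul_assoc]
  -- factorization
  set f : ℝ →+* ℂ := Complex.ofRealHom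
  have hw : w = s.map f * (B.map f + Complex.I • 1) * s.map f := by
    have hsBs : s * B * s = x := by
      rw [hB]
      calc s * (s⁻¹ * x * s⁻¹) * s = (s * s⁻¹) * x * (s⁻¹ * s) := by simp only [mul_assoc]
        _ = x := by rw [hsinv, hsinv', one_mul, mul_one]
    have : s.map f * (B.map f + Complex.I • 1) * s.map f
        = (s * B * s).map f + Complex.I • (s * s).map f := by
      rw [Matrix.mul_add, Matrix.add_mul, ← Matrix.map_mul, ← Matrix.map_mul,
        mul_smul_comm, mul_one, smul_mul_assoc, ← Matrix.map_mul]
    rw [this, hsBs, hss]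
    ext i j
    simp [f, hx, hy, Complex.ext_iff]
  have hdetw : w.det = (f s.det) * (B.map f + Complex.I • 1).det * (f s.det) := by
    rw [hw, det_mul, det_mul, mul_right_comm, mul_comm ((s.map ⇑f).det)]
    rw [show (s.map ⇑f).det = f s.det from (RingHom.map_det f s).symm]
    ring
  have habs : ‖w.det‖ = |s.det| * ‖(B.map f + Complex.I • 1).det‖ * |s.det| := by
    rw [hdetw, norm_mul, norm_mul]
    simp [f, Complex.ofRealHom_eq_coe, Complex.norm_real]
  have hy2 : |s.det| * |s.det| = y.det := by
    rw [← abs_mul, ← det_mul, hss, abs_of_pos hydet]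
  have hge : 1 ≤ ‖(B.map f + Complex.I • 1).det‖ := aux_abs_det B hBH
  calc y.det = |s.det| * 1 * |s.det| := by rw [mul_one, hy2]
    _ ≤ |s.det| * ‖(B.map f + Complex.I • 1).det‖ * |s.det| := by
        apply mul_le_mul_of_nonneg_right _ (abs_nonneg _)
        exact mul_le_mul_of_nonneg_left hge (abs_nonneg _)
    _ = ‖w.det‖ := habs.symm
end
end

section
/- Let y be a real symmetric positive definite n×n matrix with eigenvalues λ_1 ≤ λ_2 ≤ … ≤ λ_n, and let Q be an n×r integer matrix of rank r, where 1 ≤ r ≤ n. Then det(Qᵀ y Q) ≥ λ_1 λ_2 ⋯ λ_r. -/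
open Matrix
open Matrix Finset Equiv Function

variable {R : Type*} [CommRing R] {n r : ℕ}

private def T {n r : ℕ} {R : Type*} [CommRing R] (A : Matrix (Fin n) (Fin r) R)
    (d : Fin n → R) (p : Fin r → Fin n) : R :=
  (∏ i, d (p i)) * (∏ i, A (p i) i) * det (A.submatrix p id)

theorem cb (A : Matrix (Fin n) (Fin r) R) (d : Fin n → R) :
    det (Aᵀ * Matrix.diagonal d * A) =
    ∑ g ∈ Finset.univ.filter (fun g : Fin r → Fin n => StrictMono g),
      (∏ i, d (g i)) * det (A.submatrix g id) ^ 2 := by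
  classical
  have hdetrow : ∀ p : Fin r → Fin n,
      det (A.submatrix p id) = ∑ σ : Perm (Fin r), ((Perm.sign σ : ℤ) : R) * ∏ i, A (p (σ i)) i := by
    intro p; rw [det_apply']; rfl
  have hdetcol : ∀ p : Fin r → Fin n,
      det (A.submatrix p id) = ∑ σ : Perm (Fin r), ((Perm.sign σ : ℤ) : R) * ∏ i, A (p i) (σ i) := by
    intro p
    rw [← Matrix.det_transpose, det_apply']
    rfl
  have step1 : det (Aᵀ * Matrix.diagonal d * A) = ∑ p : Fin r → Fin n, T A d p := by
    have hM : ∀ a b, (Aᵀ * Matrix.diagonal d * A) a b = ∑ k, A k a * d k * A k b := by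
      intro a b
      rw [Matrix.mul_apply]
      refine Finset.sum_congr rfl fun k _ => ?_
      rw [Matrix.mul_diagonal, Matrix.transpose_apply]
    calc det (Aᵀ * Matrix.diagonal d * A)
        = ∑ σ : Perm (Fin r), ((Perm.sign σ : ℤ) : R) * ∏ i, ∑ k, A k (σ i) * d k * A k i := by
          rw [det_apply']; simp only [hM]
      _ = ∑ σ : Perm (Fin r), ∑ p : Fin r → Fin n,
            ((Perm.sign σ : ℤ) : R) * ∏ i, A (p i) (σ i) * d (p i) * A (p i) i := by
          simp only [Finset.prod_univ_sum, Fintype.piFinset_univ, Finset.mul_sum]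
      _ = ∑ p : Fin r → Fin n, ∑ σ : Perm (Fin r),
            ((Perm.sign σ : ℤ) : R) * ∏ i, A (p i) (σ i) * d (p i) * A (p i) i :=
          Finset.sum_comm
      _ = ∑ p : Fin r → Fin n, T A d p := by
          refine Finset.sum_congr rfl fun p _ => ?_
          have h1 : ∀ σ : Perm (Fin r),
              (∏ i, A (p i) (σ i) * d (p i) * A (p i) i)
                = (∏ i, d (p i)) * (∏ i, A (p i) i) * ∏ i, A (p i) (σ i) := by
            intro σ
            rw [Finset.prod_mul_distrib, Finset.prod_mul_distrib]
            ring
          calc ∑ σ : Perm (Fin r), ((Perm.sign σ : ℤ) : R)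
                  * ∏ i, A (p i) (σ i) * d (p i) * A (p i) i
              = (∏ i, d (p i)) * (∏ i, A (p i) i)
                  * ∑ σ : Perm (Fin r), ((Perm.sign σ : ℤ) : R) * ∏ i, A (p i) (σ i) := by
                rw [Finset.mul_sum]
                refine Finset.sum_congr rfl fun σ _ => ?_
                rw [h1]; ring
            _ = T A d p := by rw [← hdetcol p, T]
  have hcard : ∀ {p : Fin r → Fin n}, Function.Injective p →
      (Finset.univ.image p).card = r := by
    intro p hp
    rw [Finset.card_image_of_injective _ hp, Finset.card_univ, Fintype.card_fin]
  have huniq : ∀ {g₁ g₂ : Fin r → Fin n}, StrictMono g₁ → StrictMono g₂ →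
      Finset.univ.image g₁ = Finset.univ.image g₂ → g₁ = g₂ := by
    intro g₁ g₂ h1 h2 himg
    have c1 : (Finset.univ.image g₁).card = r := hcard h1.injective
    have e1 : g₁ = ⇑((Finset.univ.image g₁).orderEmbOfFin c1) :=
      Finset.orderEmbOfFin_unique c1 (fun x => Finset.mem_image_of_mem _ (Finset.mem_univ x)) h1
    have e2 : g₂ = ⇑((Finset.univ.image g₁).orderEmbOfFin c1) :=
      Finset.orderEmbOfFin_unique c1
        (fun x => himg ▸ Finset.mem_image_of_mem _ (Finset.mem_univ x)) h2
    rw [e1, e2]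
  have himgcomp : ∀ (g : Fin r → Fin n) (τ : Perm (Fin r)),
      Finset.univ.image (g ∘ τ) = Finset.univ.image g := by
    intro g τ
    ext k
    simp only [Finset.mem_image, Finset.mem_univ, true_and, Function.comp_apply]
    constructor
    · rintro ⟨i, hi⟩; exact ⟨τ i, hi⟩
    · rintro ⟨i, hi⟩; exact ⟨τ.symm i, by simpa using hi⟩
  have step2 : (∑ p : Fin r → Fin n, T A d p)
      = ∑ p ∈ Finset.univ.filter (fun p : Fin r → Fin n => Function.Injective p), T A d p := by
    symm
    apply Finset.sum_subset (Finset.filter_subset _ _)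
    intro p _ hp
    simp only [Finset.mem_filter, Finset.mem_univ, true_and] at hp
    obtain ⟨i, j, hij, hne⟩ : ∃ i j, p i = p j ∧ i ≠ j := by
      rw [Function.Injective] at hp; push_neg at hp
      obtain ⟨i, j, h1, h2⟩ := hp; exact ⟨i, j, h1, h2⟩
    have hz : det (A.submatrix p id) = 0 :=
      Matrix.det_zero_of_row_eq hne (funext fun k => by simp [hij])
    simp [T, hz]
  have step3 : (∑ p ∈ Finset.univ.filter (fun p : Fin r → Fin n => Function.Injective p), T A d p)
      = ∑ g ∈ Finset.univ.filter (fun g : Fin r → Fin n => StrictMono g),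
          ∑ τ : Perm (Fin r), T A d (g ∘ τ) := by
    rw [Finset.sum_sigma']
    symm
    refine Finset.sum_bij (fun x _ => x.1 ∘ x.2) ?_ ?_ ?_ ?_
    · rintro ⟨g, τ⟩ hx
      simp only [Finset.mem_sigma, Finset.mem_filter, Finset.mem_univ, true_and, and_true] at hx
      simp only [Finset.mem_filter, Finset.mem_univ, true_and]
      exact hx.injective.comp τ.injective
    · rintro ⟨g₁, τ₁⟩ h1 ⟨g₂, τ₂⟩ h2 heq
      simp only [Finset.mem_sigma, Finset.mem_filter, Finset.mem_univ, true_and, and_true] at h1 h2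
      have heq' : g₁ ∘ ⇑τ₁ = g₂ ∘ ⇑τ₂ := heq
      have himg : Finset.univ.image g₁ = Finset.univ.image g₂ := by
        rw [← himgcomp g₁ τ₁, ← himgcomp g₂ τ₂, heq']
      have hg : g₁ = g₂ := huniq h1 h2 himg
      subst hg
      have hτ : τ₁ = τ₂ := by
        ext i
        exact congrArg Fin.val (h1.injective (congrFun heq' i))
      subst hτ
      rfl
    · intro p hp
      simp only [Finset.mem_filter, Finset.mem_univ, true_and] at hp
      set s := Finset.univ.image p with hs
      have hc : s.card = r := hcard hp
      set g : Fin r → Fin n := ⇑(s.orderEmbOfFin hc) with hg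
      have hgm : StrictMono g := (s.orderEmbOfFin hc).strictMono
      have hmem : ∀ i, p i ∈ s := fun i => Finset.mem_image_of_mem _ (Finset.mem_univ i)
      set t : Fin r → Fin r := fun i => (s.orderIsoOfFin hc).symm ⟨p i, hmem i⟩ with ht
      have htinj : Function.Injective t := by
        intro a b hab
        apply hp
        simp only [ht] at hab
        have := congrArg (fun z => ((s.orderIsoOfFin hc) z : Fin n)) hab
        simpa using this
      have htbij := (Finite.injective_iff_bijective).mp htinj
      refine ⟨⟨g, Equiv.ofBijective t htbij⟩, ?_, ?_⟩
      · simp only [Finset.mem_sigma, Finset.mem_filter, Finset.mem_univ, true_and, and_true]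
        exact hgm
      · funext i
        show g (t i) = p i
        rw [hg, ht]
        rw [← Finset.coe_orderIsoOfFin_apply]
        simp
    · rintro ⟨g, τ⟩ _
      rfl
  have step4 : ∀ g : Fin r → Fin n, StrictMono g →
      (∑ τ : Perm (Fin r), T A d (g ∘ τ))
        = (∏ i, d (g i)) * det (A.submatrix g id) ^ 2 := by
    intro g hg
    have hsub : ∀ τ : Perm (Fin r), A.submatrix (g ∘ τ) id = (A.submatrix g id).submatrix τ id :=
      fun τ => rfl
    calc ∑ τ : Perm (Fin r), T A d (g ∘ τ)
        = ∑ τ : Perm (Fin r), (∏ i, d (g i)) * det (A.submatrix g id)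
            * (((Perm.sign τ : ℤ) : R) * ∏ i, A (g (τ i)) i) := by
          refine Finset.sum_congr rfl fun τ _ => ?_
          rw [T, hsub τ, Matrix.det_permute]
          have hdg : (∏ i, d ((g ∘ τ) i)) = ∏ i, d (g i) := Equiv.prod_comp τ (fun i => d (g i))
          rw [hdg]
          push_cast
          simp only [Function.comp_apply]
          ring
      _ = (∏ i, d (g i)) * det (A.submatrix g id)
            * ∑ τ : Perm (Fin r), ((Perm.sign τ : ℤ) : R) * ∏ i, A (g (τ i)) i := by
          rw [Finset.mul_sum]
      _ = (∏ i, d (g i)) * det (A.submatrix g id) ^ 2 := by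
          rw [← hdetrow g]; ring
  rw [step1, step2, step3]
  exact Finset.sum_congr rfl fun g hg => step4 g (by simpa using hg)

lemma det_ne_zero_of_rank_eq {r : ℕ} (M : Matrix (Fin r) (Fin r) ℚ) (h : M.rank = r) :
    M.det ≠ 0 := by
  intro h0
  obtain ⟨v, hv, hMv⟩ := (Matrix.exists_mulVec_eq_zero_iff).mpr h0
  have hrange : LinearMap.range M.mulVecLin = ⊤ := by
    apply Submodule.eq_top_of_finrank_eq
    show M.rank = _
    rw [h, Module.finrank_pi, Fintype.card_fin]
  have hsurj : Function.Surjective M.mulVecLin := LinearMap.range_eq_top.mp hrange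
  have hinj : Function.Injective M.mulVecLin :=
    (LinearMap.injective_iff_surjective_of_finrank_eq_finrank rfl).mpr hsurj
  apply hv
  have : M.mulVecLin v = M.mulVecLin 0 := by
    simp [Matrix.mulVecLin_apply, hMv]
  exact hinj this

lemma zge1 {n r : ℕ} (Q : Matrix (Fin n) (Fin r) ℤ)
    (hQ : (Q.map (Int.cast : ℤ → ℚ)).rank = r) : (1 : ℤ) ≤ (Qᵀ * Q).det := by
  have h0 : 0 ≤ (Qᵀ * Q).det := by
    have he : Qᵀ * Q = Qᵀ * Matrix.diagonal (fun _ : Fin n => (1:ℤ)) * Q := by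
      rw [Matrix.diagonal_one, Matrix.mul_one]
    rw [he, cb]
    apply Finset.sum_nonneg
    intro g _
    simp only [Finset.prod_const_one, one_mul]
    positivity
  have hmapQ : (Qᵀ * Q).map (Int.cast : ℤ → ℚ)
      = (Q.map (Int.cast : ℤ → ℚ))ᵀ * Q.map (Int.cast : ℤ → ℚ) := by
    ext i j
    simp [Matrix.mul_apply, Matrix.map_apply, Matrix.transpose_apply]
  have hrank : ((Q.map (Int.cast : ℤ → ℚ))ᵀ * Q.map (Int.cast : ℤ → ℚ)).rank = r := by
    rw [Matrix.rank_transpose_mul_self, hQ]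
  have hdet : ((Q.map (Int.cast : ℤ → ℚ))ᵀ * Q.map (Int.cast : ℤ → ℚ)).det ≠ 0 :=
    det_ne_zero_of_rank_eq _ hrank
  have hne : (Qᵀ * Q).det ≠ 0 := by
    intro hz
    apply hdet
    have h : ((Qᵀ * Q).map (Int.cast : ℤ → ℚ)).det = (((Qᵀ * Q).det : ℤ) : ℚ) :=
      ((Int.castRingHom ℚ).map_det _).symm
    rw [← hmapQ, h, hz, Int.cast_zero]
  omega

lemma smle {r n : ℕ} {f : Fin r → Fin n} (hf : StrictMono f) (i : Fin r) :
    (i : ℕ) ≤ (f i : ℕ) := by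
  obtain ⟨iv, hi⟩ := i
  induction iv with
  | zero => exact Nat.zero_le _
  | succ k ih =>
    have h1 : (⟨k, Nat.lt_of_succ_lt hi⟩ : Fin r) < ⟨k+1, hi⟩ := by
      simp [Fin.lt_def]
    have h2 := Fin.lt_def.mp (hf h1)
    have h3 := ih (Nat.lt_of_succ_lt hi)
    simp only [Fin.val_mk] at h2 h3 ⊢
    omega

lemma prodlemma {n r : ℕ} (hrn : r ≤ n) (lam : Fin n → ℝ) (hmono : Monotone lam)
    (hpos : ∀ k, 0 < lam k) {q : Fin r → Fin n} (hq : Function.Injective q) :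
    (∏ j : Fin r, lam (Fin.castLE hrn j)) ≤ ∏ i, lam (q i) := by
  classical
  set s := Finset.univ.image q with hs
  have hc : s.card = r := by
    rw [hs, Finset.card_image_of_injective _ hq, Finset.card_univ, Fintype.card_fin]
  have h1 : (∏ i, lam (q i)) = ∏ k ∈ s, lam k :=
    (Finset.prod_image (fun x _ y _ h => hq h)).symm
  have himg : Finset.univ.image ⇑(s.orderEmbOfFin hc) = s := by
    ext k
    simp only [Finset.mem_image, Finset.mem_univ, true_and]
    constructor
    · rintro ⟨i, rfl⟩; exact Finset.orderEmbOfFin_mem s hc i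
    · intro hk
      have : k ∈ Set.range ⇑(s.orderEmbOfFin hc) := by
        rw [Finset.range_orderEmbOfFin]; exact hk
      exact this
  have h2 : (∏ k ∈ s, lam k) = ∏ i : Fin r, lam (s.orderEmbOfFin hc i) := by
    symm
    refine Finset.prod_nbij (fun i => s.orderEmbOfFin hc i)
      (fun a _ => Finset.orderEmbOfFin_mem s hc a)
      (fun a _ b _ h => (s.orderEmbOfFin hc).injective h) ?_ (fun a _ => rfl)
    intro k hk
    have : k ∈ Set.range ⇑(s.orderEmbOfFin hc) := by
      rw [Finset.range_orderEmbOfFin]; exact hk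
    obtain ⟨i, hi⟩ := this
    exact ⟨i, by simp, hi⟩
  rw [h1, h2]
  apply Finset.prod_le_prod
  · intro i _; exact (hpos _).le
  · intro i _
    apply hmono
    rw [Fin.le_def]
    simpa using smle (s.orderEmbOfFin hc).strictMono i

noncomputable section

theorem statement5 {n r : ℕ} (hr1 : 1 ≤ r) (hrn : r ≤ n)
    (y : Matrix (Fin n) (Fin n) ℝ) (hy : y.PosDef)
    (lam : Fin n → ℝ) (hmono : Monotone lam)
    (hlam : ∃ σ : Equiv.Perm (Fin n), lam = hy.1.eigenvalues ∘ σ)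
    (Q : Matrix (Fin n) (Fin r) ℤ)
    (hQ : (Q.map (Int.cast : ℤ → ℚ)).rank = r) :
    ∏ j : Fin r, lam (Fin.castLE hrn j) ≤
      ((Q.map (Int.cast : ℤ → ℝ))ᵀ * y * Q.map (Int.cast : ℤ → ℝ)).det := by
  classical
  obtain ⟨σ, hσ⟩ := hlam
  have hμpos : ∀ i, 0 < hy.1.eigenvalues i := hy.eigenvalues_pos
  have hlampos : ∀ k, 0 < lam k := by
    intro k; rw [hσ]; exact hμpos _
  set μ : Fin n → ℝ := hy.1.eigenvalues with hμ
  set Qr : Matrix (Fin n) (Fin r) ℝ := Q.map (Int.cast : ℤ → ℝ) with hQr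
  set P : Matrix (Fin n) (Fin n) ℝ :=
    (Matrix.IsHermitian.eigenvectorUnitary hy.1 : Matrix (Fin n) (Fin n) ℝ) with hP
  have hstar : star P = Pᵀ := by
    rw [Matrix.star_eq_conjTranspose]
    ext i j
    simp [Matrix.conjTranspose_apply]
  have hyspec : y = P * Matrix.diagonal μ * Pᵀ := by
    have h := hy.1.spectral_theorem
    rw [Unitary.conjStarAlgAut_apply] at h
    rw [hstar] at h
    rw [RCLike.ofReal_real_eq_id, Function.id_comp] at h
    exact h
  have hPPt : P * Pᵀ = 1 := by
    rw [← hstar]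
    exact (Matrix.mem_unitaryGroup_iff).mp (Matrix.IsHermitian.eigenvectorUnitary hy.1).2
  set B : Matrix (Fin n) (Fin r) ℝ := Pᵀ * Qr with hB
  have hB1 : Bᵀ * Matrix.diagonal μ * B = Qrᵀ * y * Qr := by
    rw [hyspec, hB, Matrix.transpose_mul, Matrix.transpose_transpose]
    simp only [Matrix.mul_assoc]
  have hB2 : Bᵀ * B = Qrᵀ * Qr := by
    rw [hB, Matrix.transpose_mul, Matrix.transpose_transpose]
    calc Qrᵀ * P * (Pᵀ * Qr) = Qrᵀ * (P * Pᵀ) * Qr := by simp only [Matrix.mul_assoc]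
      _ = Qrᵀ * Qr := by rw [hPPt, Matrix.mul_one]
  have hz1 : (1:ℤ) ≤ (Qᵀ * Q).det := zge1 Q hQ
  have hdetQQ : (Qrᵀ * Qr).det = (((Qᵀ * Q).det : ℤ) : ℝ) := by
    have hmap : (Qᵀ * Q).map (Int.cast : ℤ → ℝ) = Qrᵀ * Qr := by
      ext i j
      simp [Matrix.mul_apply, Matrix.map_apply, Matrix.transpose_apply, hQr]
    rw [← hmap]
    exact ((Int.castRingHom ℝ).map_det _).symm
  set L := ∏ j : Fin r, lam (Fin.castLE hrn j) with hL
  have hL0 : 0 ≤ L := Finset.prod_nonneg fun j _ => (hlampos _).le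
  have hterm : ∀ g : Fin r → Fin n, StrictMono g → L ≤ ∏ i, μ (g i) := by
    intro g hg
    have hqinj : Function.Injective (fun i => σ.symm (g i)) :=
      σ.symm.injective.comp hg.injective
    have heq : (∏ i, μ (g i)) = ∏ i, lam (σ.symm (g i)) := by
      refine Finset.prod_congr rfl fun i _ => ?_
      rw [hσ]; simp
    rw [heq, hL]
    exact prodlemma hrn lam hmono hlampos hqinj
  have hsum1 : (Qrᵀ * y * Qr).det
      = ∑ g ∈ Finset.univ.filter (fun g : Fin r → Fin n => StrictMono g),
          (∏ i, μ (g i)) * det (B.submatrix g id) ^ 2 := by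
    rw [← hB1, cb]
  have hsum2 : (Qrᵀ * Qr).det
      = ∑ g ∈ Finset.univ.filter (fun g : Fin r → Fin n => StrictMono g),
          det (B.submatrix g id) ^ 2 := by
    rw [← hB2]
    have he : Bᵀ * B = Bᵀ * Matrix.diagonal (fun _ : Fin n => (1:ℝ)) * B := by
      rw [Matrix.diagonal_one, Matrix.mul_one]
    rw [he, cb]
    simp
  calc L = L * 1 := (mul_one L).symm
    _ ≤ L * (((Qᵀ * Q).det : ℤ) : ℝ) := by
        apply mul_le_mul_of_nonneg_left _ hL0
        exact_mod_cast hz1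
    _ = L * (Qrᵀ * Qr).det := by rw [hdetQQ]
    _ = ∑ g ∈ Finset.univ.filter (fun g : Fin r → Fin n => StrictMono g),
          L * det (B.submatrix g id) ^ 2 := by rw [hsum2, Finset.mul_sum]
    _ ≤ ∑ g ∈ Finset.univ.filter (fun g : Fin r → Fin n => StrictMono g),
          (∏ i, μ (g i)) * det (B.submatrix g id) ^ 2 := by
        apply Finset.sum_le_sum
        intro g hg
        simp only [Finset.mem_filter, Finset.mem_univ, true_and] at hg
        exact mul_le_mul_of_nonneg_right (hterm g hg) (sq_nonneg _)
    _ = (Qrᵀ * y * Qr).det := hsum1.symm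

end
end

section
/- For every n ≥ 1 and every z ∈ ℍ_n, the family (exp(π i · aᵀ z a))_{a ∈ ℤⁿ}, indexed by integer column vectors a of length n, is absolutely summable. -/
open Matrix

noncomputable section

lemma aux_exp_int_sq {t : ℝ} (ht : 0 < t) :
    Summable fun m : ℤ => Real.exp (-t * (m : ℝ) ^ 2) := by
  have hnat : Summable fun k : ℕ => Real.exp (-t * (k : ℝ) ^ 2) := by
    refine Summable.of_nonneg_of_le (fun k => (Real.exp_pos _).le) ?_
      (Real.summable_exp_nat_mul_iff.mpr (neg_neg_of_pos ht))
    intro k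
    apply Real.exp_le_exp.mpr
    have : (k : ℝ) ≤ (k : ℝ) ^ 2 := by
      rcases Nat.eq_zero_or_pos k with h | h
      · simp [h]
      · have : (1 : ℝ) ≤ (k : ℝ) := by exact_mod_cast h
        nlinarith
    nlinarith
  apply Summable.of_nat_of_neg <;> simpa using hnat

lemma aux_pi (n : ℕ) {t : ℝ} (ht : 0 < t) :
    Summable fun a : Fin n → ℤ => Real.exp (-t * ∑ i, ((a i : ℝ)) ^ 2) := by
  induction n with
  | zero =>
    exact summable_of_finite_support (Set.toFinite _)
  | succ m ih =>
    have key : Summable fun p : ℤ × (Fin m → ℤ) =>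
        Real.exp (-t * (p.1 : ℝ) ^ 2) * Real.exp (-t * ∑ i, ((p.2 i : ℝ)) ^ 2) :=
      (aux_exp_int_sq ht).mul_of_nonneg ih (fun _ => (Real.exp_pos _).le)
        (fun _ => (Real.exp_pos _).le)
    have h2 := key.comp_injective
      (Equiv.injective ((Fin.consEquiv (fun _ : Fin (m+1) => ℤ)).symm))
    refine h2.congr fun a => ?_
    simp only [Function.comp, Fin.consEquiv_symm_apply, Fin.tail]
    rw [← Real.exp_add, Fin.sum_univ_succ]
    ring_nf

/-- Lower bound for a positive definite quadratic form. -/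
lemma aux_posdef_bound {n : ℕ} (hn : 1 ≤ n) (M : Matrix (Fin n) (Fin n) ℝ)
    (hM : M.PosDef) : ∃ c > 0, ∀ x : Fin n → ℝ,
      c * ∑ i, x i ^ 2 ≤ x ⬝ᵥ M *ᵥ x := by
  set Q : EuclideanSpace ℝ (Fin n) → ℝ := fun x => (x : Fin n → ℝ) ⬝ᵥ M *ᵥ x with hQ
  have hQc : Continuous Q := by
    have : Continuous fun x : Fin n → ℝ => x ⬝ᵥ M *ᵥ x := by
      unfold dotProduct mulVec dotProduct
      fun_prop
    exact this.comp (PiLp.continuous_ofLp (p := 2) (β := fun _ : Fin n => ℝ))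
  have hsc : IsCompact (Metric.sphere (0 : EuclideanSpace ℝ (Fin n)) 1) :=
    isCompact_sphere 0 1
  have hsne : (Metric.sphere (0 : EuclideanSpace ℝ (Fin n)) 1).Nonempty := by
    refine ⟨EuclideanSpace.single ⟨0, hn⟩ (1 : ℝ), ?_⟩
    simp [EuclideanSpace.norm_single]
  obtain ⟨x₀, hx₀s, hx₀'⟩ := hsc.exists_isMinOn hsne hQc.continuousOn
  have hx₀ : ∀ x ∈ Metric.sphere (0 : EuclideanSpace ℝ (Fin n)) 1, Q x₀ ≤ Q x :=
    fun x hx => hx₀' hx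
  have hx₀ne : (x₀ : Fin n → ℝ) ≠ 0 := by
    intro h
    have : ‖x₀‖ = 1 := by simpa using hx₀s
    rw [show x₀ = 0 from WithLp.ofLp_injective (p := 2) (by simpa using h)] at this
    simp at this
  refine ⟨Q x₀, by simpa [hQ] using hM.dotProduct_mulVec_pos hx₀ne, fun x => ?_⟩
  by_cases hx : x = 0
  · simp [hx, dotProduct]
  · set y : EuclideanSpace ℝ (Fin n) := (EuclideanSpace.equiv (Fin n) ℝ).symm x
    have hyne : y ≠ 0 := by
      simpa [y] using hx
    have hr : 0 < ‖y‖ := norm_pos_iff.mpr hyne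
    have hmem : ‖y‖⁻¹ • y ∈ Metric.sphere (0 : EuclideanSpace ℝ (Fin n)) 1 := by
      simp [norm_smul, abs_of_pos (inv_pos.mpr hr), inv_mul_cancel₀ hr.ne']
    have hle := hx₀ _ hmem
    have hy : (y : Fin n → ℝ) = x := rfl
    have hQsmul : Q (‖y‖⁻¹ • y) = ‖y‖⁻¹ * (‖y‖⁻¹ * Q y) := by
      simp only [hQ]
      have : ((‖y‖⁻¹ • y : EuclideanSpace ℝ (Fin n)) : Fin n → ℝ)
          = ‖y‖⁻¹ • (y : Fin n → ℝ) := rfl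
      rw [this, smul_dotProduct, mulVec_smul, dotProduct_smul]
      simp [smul_eq_mul, mul_assoc]
    have hnormsq : ‖y‖ ^ 2 = ∑ i, x i ^ 2 := by
      rw [EuclideanSpace.norm_eq]
      rw [Real.sq_sqrt (by positivity)]
      exact Finset.sum_congr rfl fun i _ => by rw [hy]; simp [sq_abs]
    have : Q x₀ * ‖y‖ ^ 2 ≤ Q y := by
      rw [hQsmul] at hle
      have h2 : Q x₀ * ‖y‖ * ‖y‖ ≤ ‖y‖⁻¹ * (‖y‖⁻¹ * Q y) * ‖y‖ * ‖y‖ := by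
        nlinarith [hr, mul_le_mul_of_nonneg_right (mul_le_mul_of_nonneg_right hle hr.le) hr.le]
      have h3 : ‖y‖⁻¹ * (‖y‖⁻¹ * Q y) * ‖y‖ * ‖y‖ = Q y := by
        field_simp
      rw [h3] at h2
      nlinarith [h2]
    calc Q x₀ * ∑ i, x i ^ 2 = Q x₀ * ‖y‖ ^ 2 := by rw [hnormsq]
      _ ≤ Q y := this
      _ = x ⬝ᵥ M *ᵥ x := rfl

theorem statement10 {n : ℕ} (hn : 1 ≤ n) (z : Matrix (Fin n) (Fin n) ℂ)
    (hz : z ∈ SiegelUpper n) :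
    Summable fun a : Fin n → ℤ =>
      ‖Complex.exp ((Real.pi : ℂ) * Complex.I *
        ∑ i, ∑ j, (a i : ℂ) * z i j * (a j : ℂ))‖ := by
  obtain ⟨c, hc, hbound⟩ := aux_posdef_bound hn _ hz.2
  have hsum := aux_pi n (t := Real.pi * c) (by positivity)
  refine Summable.of_nonneg_of_le (fun a => norm_nonneg _) (fun a => ?_) hsum
  rw [Complex.norm_exp]
  apply Real.exp_le_exp.mpr
  -- real part computation
  have him : (∑ i, ∑ j, (a i : ℂ) * z i j * (a j : ℂ)).im
      = ∑ i, ∑ j, (a i : ℝ) * (z i j).im * (a j : ℝ) := by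
    rw [Complex.im_sum]
    refine Finset.sum_congr rfl fun i _ => ?_
    rw [Complex.im_sum]
    refine Finset.sum_congr rfl fun j _ => ?_
    simp [Complex.mul_im, Complex.mul_re]
  have hre : ((Real.pi : ℂ) * Complex.I *
      ∑ i, ∑ j, (a i : ℂ) * z i j * (a j : ℂ)).re
      = -Real.pi * (∑ i, ∑ j, (a i : ℝ) * (z i j).im * (a j : ℝ)) := by
    rw [Complex.mul_re]
    simp [Complex.mul_im, Complex.mul_re, him]
  rw [hre]
  have hq : (∑ i, ∑ j, (a i : ℝ) * (z i j).im * (a j : ℝ))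
      = (fun i => (a i : ℝ)) ⬝ᵥ (z.map Complex.im) *ᵥ (fun i => (a i : ℝ)) := by
    simp [dotProduct, mulVec, Finset.mul_sum, map_apply]
    exact Finset.sum_congr rfl fun i _ => Finset.sum_congr rfl fun j _ => by ring
  have hb := hbound fun i => (a i : ℝ)
  rw [← hq] at hb
  nlinarith [Real.pi_pos, hb]
end
end

section
/- Let p be a prime and let d be an invertible n×n matrix over ℚ_p. Then there exists an n×n matrix u with entries in ℤ_p, invertible over ℤ_p, such that the product u·d (computed over ℚ_p) is upper triangular and its (i,i)-entry equals p^{a_i} for some integer a_i, for each 1 ≤ i ≤ n. -/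
open Matrix

noncomputable section

lemma map_coe_apply {p : ℕ} [Fact p.Prime] {m k : Type*} (A : Matrix m k ℤ_[p]) (i : m) (j : k) :
    A.map ((↑) : ℤ_[p] → ℚ_[p]) i j = (A i j : ℚ_[p]) := rfl

lemma coe_ite' {p : ℕ} [Fact p.Prime] (P : Prop) [Decidable P] (x y : ℤ_[p]) :
    (((if P then x else y : ℤ_[p])) : ℚ_[p]) = if P then (x : ℚ_[p]) else (y : ℚ_[p]) := by
  split_ifs <;> rfl

lemma padic_exists_unit_mul_eq_pow {p : ℕ} [Fact p.Prime] {x : ℚ_[p]} (hx : x ≠ 0) :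
    ∃ (ε : ℤ_[p]) (a : ℤ), IsUnit ε ∧ (ε : ℚ_[p]) * x = (p : ℚ_[p]) ^ a := by
  have hp : (1 : ℕ) < p := (Fact.out (p := p.Prime)).one_lt
  have hp0 : (0 : ℝ) < (p : ℝ) := by exact_mod_cast Nat.lt_of_lt_of_le Nat.zero_lt_one hp.le
  set v := x.valuation with hv
  set e : ℚ_[p] := (p : ℚ_[p]) ^ v * x⁻¹ with he
  have hnorm : ‖e‖ = 1 := by
    rw [he, norm_mul, norm_zpow, norm_inv, Padic.norm_eq_zpow_neg_valuation hx, Padic.norm_p, ← hv,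
      _root_.inv_zpow, ← _root_.zpow_neg, ← _root_.zpow_neg, neg_neg, ← zpow_add₀ (ne_of_gt hp0),
      neg_add_cancel, zpow_zero]
  refine ⟨⟨e, le_of_eq hnorm⟩, v, PadicInt.isUnit_iff.2 hnorm, ?_⟩
  show e * x = _
  rw [he, mul_assoc, inv_mul_cancel₀ hx, mul_one]

theorem statement12 {p : ℕ} [Fact p.Prime] {n : ℕ}
    (d : Matrix (Fin n) (Fin n) ℚ_[p]) (hd : IsUnit d.det) :
    ∃ u : Matrix (Fin n) (Fin n) ℤ_[p], IsUnit u.det ∧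
      Matrix.BlockTriangular (u.map ((↑) : ℤ_[p] → ℚ_[p]) * d) id ∧
      ∀ i : Fin n, ∃ a : ℤ, (u.map ((↑) : ℤ_[p] → ℚ_[p]) * d) i i = (p : ℚ_[p]) ^ a := by
  induction n with
  | zero => exact ⟨1, by simp, fun i j _ => i.elim0, fun i => i.elim0⟩
  | succ n IH =>
    set c : Fin (n + 1) → ℚ_[p] := fun i => d i 0 with hc
    obtain ⟨i0, -, hi0⟩ := Finset.exists_max_image Finset.univ (fun i => ‖c i‖)
      ⟨0, Finset.mem_univ 0⟩
    have hc0 : c i0 ≠ 0 := by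
      intro h0
      have hz : ∀ i, d i 0 = 0 := by
        intro i
        have := hi0 i (Finset.mem_univ i)
        rw [h0, norm_zero] at this
        exact norm_le_zero_iff.mp this
      rw [Matrix.det_eq_zero_of_column_eq_zero 0 hz] at hd
      exact hd.ne_zero rfl
    obtain ⟨ε, a, hεu, hεmul⟩ := padic_exists_unit_mul_eq_pow hc0
    set σ : Equiv.Perm (Fin (n + 1)) := Equiv.swap 0 i0 with hσ
    have hq : ∀ i, ‖c i / c i0‖ ≤ 1 := fun i => by
      rw [norm_div]
      exact div_le_one_of_le₀ (hi0 i (Finset.mem_univ i)) (norm_nonneg _)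
    set q : Fin (n + 1) → ℤ_[p] := fun i => ⟨c i / c i0, hq i⟩ with hqdef
    set A : Matrix (Fin (n + 1)) (Fin (n + 1)) ℤ_[p] := Matrix.of fun i j =>
      if i = 0 then (if j = 0 then ε else 0)
      else (if i = j then 1 else 0) - (if j = 0 then q (σ i) else 0) with hA
    set u1 : Matrix (Fin (n + 1)) (Fin (n + 1)) ℤ_[p] := A.submatrix id σ with hu1
    have hAtri : A.BlockTriangular OrderDual.toDual := by
      intro i j hij
      have hij' : i < j := hij
      have hj0 : ¬(j = 0) := ne_of_gt (lt_of_le_of_lt (Fin.zero_le i) hij')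
      have hne : ¬(i = j) := ne_of_lt hij'
      simp only [hA, Matrix.of_apply]
      split_ifs <;> simp
    have hAdet : A.det = ε := by
      rw [Matrix.det_of_lowerTriangular A hAtri, Fin.prod_univ_succ]
      simp [hA, Fin.succ_ne_zero]
    have hu1det : IsUnit u1.det := by
      rw [hu1, Matrix.det_permute' σ A, hAdet]
      exact IsUnit.mul (by rcases Int.units_eq_one_or σ.sign with h | h <;> simp [h]) hεu
    set d1 : Matrix (Fin (n + 1)) (Fin (n + 1)) ℚ_[p] := u1.map (↑) * d with hd1
    have hσσ : ∀ k, σ.symm k = σ k := fun k => by rw [hσ, Equiv.symm_swap]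
    have hd1row : ∀ i j, d1 i j =
        if i = 0 then (ε : ℚ_[p]) * d i0 j
        else d (σ i) j - (c (σ i) / c i0) * d i0 j := by
      intro i j
      rw [hd1, Matrix.mul_apply]
      have hsum : ∑ k, u1.map ((↑) : ℤ_[p] → ℚ_[p]) i k * d k j
          = ∑ k, ((A i k : ℚ_[p]) * d (σ.symm k) j) :=
        Fintype.sum_equiv σ _ _ (fun k => by simp [hu1, Matrix.map_apply, map_coe_apply])
      rw [hsum]
      by_cases hi : i = 0
      · simp [hi, hA, apply_ite ((↑) : ℤ_[p] → ℚ_[p]), coe_ite', ite_mul, hσσ, hσ]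
      · simp only [hA, Matrix.of_apply, if_neg hi]
        push_cast
        simp [sub_mul, Finset.sum_sub_distrib, ite_mul, apply_ite ((↑) : ℤ_[p] → ℚ_[p]), coe_ite',
          apply_ite (Subtype.val : {x : ℚ_[p] // ‖x‖ ≤ 1} → ℚ_[p]), hσσ, hσ, hqdef]
        rw [Fintype.sum_eq_single 0 (fun x hx => by
          exact (congrArg (fun z : ℤ_[p] => (z : ℚ_[p]) * d (Equiv.swap 0 i0 x) j)
            (if_neg hx)).trans (zero_mul _))]
        rfl
    have hd1col : ∀ i, d1 i 0 = if i = 0 then (p : ℚ_[p]) ^ a else 0 := by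
      intro i
      rw [hd1row]
      split_ifs with h
      · exact hεmul
      · rw [div_mul_cancel₀ _ hc0, sub_self]
    set d2 : Matrix (Fin n) (Fin n) ℚ_[p] := d1.submatrix Fin.succ Fin.succ with hd2
    have hd1det : d1.det = (p : ℚ_[p]) ^ a * d2.det := by
      rw [Matrix.det_succ_column_zero d1, Fin.sum_univ_succ]
      simp [hd1col, Fin.succ_ne_zero, Fin.succAbove_zero, hd2]
    have hd2det : IsUnit d2.det := by
      rw [isUnit_iff_ne_zero]
      intro h
      have h0 : d1.det = 0 := by rw [hd1det, h, mul_zero]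
      rw [hd1, Matrix.det_mul] at h0
      have h1 : (u1.map ((↑) : ℤ_[p] → ℚ_[p])).det ≠ 0 := by
        have : (u1.map ((↑) : ℤ_[p] → ℚ_[p])).det = ((u1.det : ℤ_[p]) : ℚ_[p]) :=
          ((PadicInt.Coe.ringHom (p := p)).map_det u1).symm
        rw [this]
        exact PadicInt.coe_ne_zero.2 hu1det.ne_zero
      exact mul_ne_zero h1 hd.ne_zero h0
    obtain ⟨u2, hu2det, hu2tri, hu2diag⟩ := IH d2 hd2det
    set U : Matrix (Fin (n + 1)) (Fin (n + 1)) ℤ_[p] := Matrix.of fun i j =>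
      Fin.cases (Fin.cases 1 (fun _ => 0) j) (fun i' => Fin.cases 0 (fun j' => u2 i' j') j) i
      with hU
    have hUsub : U.submatrix Fin.succ Fin.succ = u2 := by
      ext i j
      simp [hU]
    have hUdet : IsUnit U.det := by
      rw [Matrix.det_succ_column_zero U, Fin.sum_univ_succ]
      have hUsub' := hUsub
      rw [hU] at hUsub'
      simpa [hU, Fin.succAbove_zero, hUsub', map_coe_apply] using hu2det
    have hmap : (U * u1).map ((↑) : ℤ_[p] → ℚ_[p])
        = U.map (↑) * u1.map (↑) := by
      have : ((↑) : ℤ_[p] → ℚ_[p]) = (PadicInt.Coe.ringHom (p := p) : ℤ_[p] →+* ℚ_[p]) := rfl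
      rw [this, Matrix.map_mul]
    have hprod : (U * u1).map ((↑) : ℤ_[p] → ℚ_[p]) * d = U.map (↑) * d1 := by
      rw [hmap, hd1, Matrix.mul_assoc]
    set E : Matrix (Fin n) (Fin n) ℚ_[p] := u2.map ((↑) : ℤ_[p] → ℚ_[p]) * d2 with hE
    have hrow0 : ∀ j, (U.map ((↑) : ℤ_[p] → ℚ_[p]) * d1) 0 j = d1 0 j := by
      intro j
      rw [Matrix.mul_apply, Fin.sum_univ_succ]
      simp [hU, map_coe_apply]
    have hrow : ∀ i' j, (U.map ((↑) : ℤ_[p] → ℚ_[p]) * d1) i'.succ j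
        = ∑ k, (u2 i' k : ℚ_[p]) * d1 k.succ j := by
      intro i' j
      rw [Matrix.mul_apply, Fin.sum_univ_succ]
      simp [hU, map_coe_apply]
    have hEeq : ∀ i' j', ∑ k, (u2 i' k : ℚ_[p]) * d1 k.succ j'.succ = E i' j' := by
      intro i' j'
      rw [hE, Matrix.mul_apply]
      simp [hd2, map_coe_apply]
    refine ⟨U * u1, by rw [Matrix.det_mul]; exact hUdet.mul hu1det, ?_, ?_⟩
    · intro i j hij
      have hij' : j < i := hij
      rw [hprod]
      obtain rfl | ⟨i', rfl⟩ := Fin.eq_zero_or_eq_succ i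
      · exact absurd hij' (Fin.not_lt_zero j)
      · rw [hrow]
        obtain rfl | ⟨j', rfl⟩ := Fin.eq_zero_or_eq_succ j
        · simp [hd1col, Fin.succ_ne_zero]
        · rw [hEeq]
          exact hu2tri (Fin.succ_lt_succ_iff.mp hij')
    · intro i
      rw [hprod]
      obtain rfl | ⟨i', rfl⟩ := Fin.eq_zero_or_eq_succ i
      · exact ⟨a, by rw [hrow0, hd1col]; simp⟩
      · obtain ⟨b, hb⟩ := hu2diag i'
        exact ⟨b, by rw [hrow, hEeq]; exact hb⟩
end
end
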